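/- If (a_1,b_1),…,(a_k,b_k) is a strict alternating cycle in a finite poset P, then {a_1,…,a_k} and {b_1,…,b_k} are each k-element antichains in P. -/

import Mathlib

/-- `x` and `y` are incomparable elements of a poset. -/
def Incomp {α : Type*} [PartialOrder α] (x y : α) : Prop := ¬ x ≤ y ∧ ¬ y ≤ x

/-- `r` is a linear extension of the partial order on `α`. -/
def IsLinearExtension {α : Type*} [PartialOrder α] (r : α → α → Prop) : Prop :=
  IsLinearOrder α r ∧ ∀ x y : α, x ≤ y → r x y

/-- `α` admits a realizer consisting of `d` linear extensions. -/
def RealizerOfSize (α : Type*) [PartialOrder α] (d : ℕ) : Prop :=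
  ∃ L : Fin d → (α → α → Prop), (∀ i, IsLinearExtension (L i)) ∧
    ∀ x y : α, x ≤ y ↔ ∀ i, L i x y

/-- The Dushnik–Miller dimension: the least positive integer `d`
for which the order is the intersection of `d` linear extensions. -/
noncomputable def dimP (α : Type*) [PartialOrder α] : ℕ :=
  sInf {d | 0 < d ∧ RealizerOfSize α d}

/-- If `(a₁,b₁),…,(a_k,b_k)` (with `k ≥ 2`) is a strict alternating cycle in a finite
poset `P`, then `{a₁,…,a_k}` and `{b₁,…,b_k}` are each `k`-element antichains in `P`. -/
theorem stmt_12 (α : Type*) [PartialOrder α] [Fintype α]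
    (k : ℕ) (a b : Fin (k + 2) → α)
    (hinc : ∀ i, Incomp (a i) (b i))
    (hstrict : ∀ i j, a i ≤ b j ↔ j = i + 1) :
    Function.Injective a ∧ Function.Injective b ∧
      (∀ i j, i ≠ j → Incomp (a i) (a j)) ∧
      (∀ i j, i ≠ j → Incomp (b i) (b j)) := by
  have hab : ∀ i : Fin (k+2), a i ≤ b (i+1) := fun i => (hstrict i (i+1)).2 rfl
  have haa : ∀ i j : Fin (k+2), a i ≤ a j → i = j := by
    intro i j h
    have := (hstrict i (j+1)).1 (h.trans (hab j))
    exact add_right_cancel this.symm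
  have hbb : ∀ i j : Fin (k+2), b i ≤ b j → i = j := by
    intro i j h
    have h1 : a (i-1) ≤ b j := ((hab (i-1)).trans_eq (by rw [sub_add_cancel])).trans h
    have := (hstrict (i-1) j).1 h1
    rw [this]; exact (sub_add_cancel i 1).symm
  refine ⟨fun i j h => haa i j h.le, fun i j h => hbb i j h.le,
    fun i j hij => ⟨fun h => hij (haa i j h), fun h => hij (haa j i h).symm⟩,
    fun i j hij => ⟨fun h => hij (hbb i j h), fun h => hij (hbb j i h).symm⟩⟩
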